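/- arXiv:2008.09864 — 5 statements merged into one kernel-verified Lean document; each statement's English description precedes it below -/
import Mathlib

section
/- Let G be a finite undirected graph with non-negative edge weights, adjacency matrix A, and degree matrix D. Define the augmented normalized adjacency = (D+I)^{-1/2}(A+I)(D+I)^{-1/2}. Then every eigenvalue λ of satisfies -1 < λ ≤ 1. -/
open Matrix

/-- Every eigenvalue of the augmented normalized adjacency
`Â = (D+I)^{-1/2} (A+I) (D+I)^{-1/2}` lies in `(-1, 1]`. -/
theorem augmented_adjacency_eigenvalue_bounds
    (N : ℕ) (A : Matrix (Fin N) (Fin N) ℝ)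
    (hsymm : A.IsSymm) (hnonneg : ∀ i j, 0 ≤ A i j)
    (deg : Fin N → ℝ) (hdeg : ∀ i, deg i = ∑ j, A i j)
    (S : Matrix (Fin N) (Fin N) ℝ)
    (hS : S = Matrix.diagonal (fun i => 1 / Real.sqrt (deg i + 1)))
    (hatA : Matrix (Fin N) (Fin N) ℝ)
    (hhat : hatA = S * (A + 1) * S)
    (μ : ℝ) (v : Fin N → ℝ) (hv : v ≠ 0)
    (heig : hatA.mulVec v = μ • v) :
    -1 < μ ∧ μ ≤ 1 := by
  have hdpos : ∀ i, (0:ℝ) < deg i + 1 := by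
    intro i
    have : 0 ≤ ∑ j, A i j := Finset.sum_nonneg fun j _ => hnonneg i j
    rw [hdeg]; linarith
  have hsne : ∀ i, Real.sqrt (deg i + 1) ≠ 0 :=
    fun i => ne_of_gt (Real.sqrt_pos.2 (hdpos i))
  set w : Fin N → ℝ := fun i => v i / Real.sqrt (deg i + 1) with hwdef
  have hv' : ∀ i, v i = Real.sqrt (deg i + 1) * w i := by
    intro i
    simp only [hwdef]
    rw [← mul_div_assoc]
    exact (mul_div_cancel_left₀ (v i) (hsne i)).symm
  -- key componentwise eigen equation for w
  have key : ∀ i, (∑ k, A i k * w k) + w i = μ * ((deg i + 1) * w i) := by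
    intro i
    have h := congrFun heig i
    rw [hhat, hS] at h
    simp only [Matrix.mulVec, dotProduct, Pi.smul_apply, smul_eq_mul] at h
    have hentry : ∀ k, (Matrix.diagonal (fun i => 1 / Real.sqrt (deg i + 1)) * (A + 1) *
        Matrix.diagonal (fun i => 1 / Real.sqrt (deg i + 1))) i k * v k
        = (1 / Real.sqrt (deg i + 1)) * ((A i k + if i = k then 1 else 0) * w k) := by
      intro k
      rw [Matrix.mul_diagonal, Matrix.diagonal_mul, Matrix.add_apply, Matrix.one_apply]
      simp only [hwdef]
      ring
    rw [Finset.sum_congr rfl fun k _ => hentry k, ← Finset.mul_sum] at h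
    have hsum : (∑ k, (A i k + if i = k then 1 else 0) * w k)
        = (∑ k, A i k * w k) + w i := by
      simp only [add_mul, Finset.sum_add_distrib, ite_mul, one_mul, zero_mul]
      rw [Finset.sum_ite_eq Finset.univ i w]
      simp
    rw [hsum] at h
    have h' := congrArg (fun x => Real.sqrt (deg i + 1) * x) h
    rw [← mul_assoc, mul_one_div, div_self (hsne i), one_mul] at h'
    rw [h', hv' i]
    linear_combination (μ * w i) * Real.mul_self_sqrt (le_of_lt (hdpos i))
  -- quadratic form quantities
  set P : ℝ := ∑ i, w i ^ 2 with hP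
  set T1 : ℝ := ∑ i, ∑ k, A i k * w i ^ 2 with hT1
  set T2 : ℝ := ∑ i, ∑ k, A i k * (w i * w k) with hT2
  have hL : ∑ i, (deg i + 1) * w i ^ 2 = T1 + P := by
    rw [hT1, hP, ← Finset.sum_add_distrib]
    refine Finset.sum_congr rfl fun i _ => ?_
    rw [hdeg i, add_mul, one_mul, Finset.sum_mul]
  have hQ : ∑ i, w i * ((∑ k, A i k * w k) + w i) = T2 + P := by
    rw [hT2, hP, ← Finset.sum_add_distrib]
    refine Finset.sum_congr rfl fun i _ => ?_
    rw [mul_add, Finset.mul_sum]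
    congr 1
    · exact Finset.sum_congr rfl fun k _ => by ring
    · ring
  have hswap : ∑ i, ∑ k, A i k * w k ^ 2 = T1 := by
    rw [Finset.sum_comm, hT1]
    refine Finset.sum_congr rfl fun k _ => Finset.sum_congr rfl fun i _ => ?_
    rw [hsymm.apply]
  -- Laplacian positivity: T2 ≤ T1
  have hsub : 0 ≤ T1 - T2 := by
    have h := Finset.sum_nonneg (fun i (_ : i ∈ Finset.univ) =>
      Finset.sum_nonneg fun k (_ : k ∈ Finset.univ) =>
        mul_nonneg (hnonneg i k) (sq_nonneg (w i - w k)))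
    have hexp : ∑ i, ∑ k, A i k * (w i - w k) ^ 2
        = ((∑ i, ∑ k, A i k * w i ^ 2) + ∑ i, ∑ k, A i k * w k ^ 2)
          - 2 * ∑ i, ∑ k, A i k * (w i * w k) := by
      rw [← Finset.sum_add_distrib, Finset.mul_sum, ← Finset.sum_sub_distrib]
      refine Finset.sum_congr rfl fun i _ => ?_
      rw [← Finset.sum_add_distrib, Finset.mul_sum, ← Finset.sum_sub_distrib]
      exact Finset.sum_congr rfl fun k _ => by ring
    rw [hexp, hswap, ← hT1, ← hT2] at h
    linarith
  -- signless Laplacian positivity: -T1 ≤ T2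
  have hadd : 0 ≤ T1 + T2 := by
    have h := Finset.sum_nonneg (fun i (_ : i ∈ Finset.univ) =>
      Finset.sum_nonneg fun k (_ : k ∈ Finset.univ) =>
        mul_nonneg (hnonneg i k) (sq_nonneg (w i + w k)))
    have hexp : ∑ i, ∑ k, A i k * (w i + w k) ^ 2
        = ((∑ i, ∑ k, A i k * w i ^ 2) + ∑ i, ∑ k, A i k * w k ^ 2)
          + 2 * ∑ i, ∑ k, A i k * (w i * w k) := by
      rw [← Finset.sum_add_distrib, Finset.mul_sum, ← Finset.sum_add_distrib]
      refine Finset.sum_congr rfl fun i _ => ?_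
      rw [← Finset.sum_add_distrib, Finset.mul_sum, ← Finset.sum_add_distrib]
      exact Finset.sum_congr rfl fun k _ => by ring
    rw [hexp, hswap, ← hT1, ← hT2] at h
    linarith
  -- P > 0
  have hPpos : 0 < P := by
    obtain ⟨i, hi⟩ := Function.ne_iff.1 hv
    have hwi : w i ≠ 0 := by
      simp only [hwdef]
      exact div_ne_zero hi (hsne i)
    have h1 : w i ^ 2 ≤ P :=
      Finset.single_le_sum (fun j (_ : j ∈ Finset.univ) => sq_nonneg (w j))
        (Finset.mem_univ i)
    have h2 : 0 < w i ^ 2 :=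
      lt_of_le_of_ne (sq_nonneg _) (Ne.symm (pow_ne_zero 2 hwi))
    linarith
  have hT1nn : 0 ≤ T1 :=
    Finset.sum_nonneg fun i _ => Finset.sum_nonneg fun k _ =>
      mul_nonneg (hnonneg i k) (sq_nonneg (w i))
  have hLpos : 0 < T1 + P := by linarith
  -- Rayleigh quotient identity
  have hmu : T2 + P = μ * (T1 + P) := by
    rw [← hQ, ← hL, Finset.mul_sum]
    refine Finset.sum_congr rfl fun i _ => ?_
    rw [mul_comm (w i) _, key i]
    ring
  constructor
  · have hlt : -1 * (T1 + P) < μ * (T1 + P) := by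
      rw [neg_one_mul, ← hmu]; linarith
    exact (mul_lt_mul_iff_of_pos_right hLpos).1 hlt
  · have hle : μ * (T1 + P) ≤ 1 * (T1 + P) := by
      rw [one_mul, ← hmu]; linarith
    exact (mul_le_mul_iff_of_pos_right hLpos).1 hle
end

section
/- Let ∈ ℝ^{N×N} be symmetric with eigendecomposition in which the eigenspace for eigenvalue 1 equals the column span of Ê (orthonormal columns), and all other eigenvalues have absolute value at most λ < 1. Let M = {ÊC : C ∈ ℝ^{M×C}} and d_M(H) = inf_{Y∈M} ‖H − Y‖_F. Then for any H ∈ ℝ^{N×C}, d_M(ÂH) ≤ λ · d_M(H). -/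
open Matrix Pointwise

/-- The Frobenius norm on real `N × C` matrices. -/
noncomputable def frobNorm {N C : ℕ} (H : Matrix (Fin N) (Fin C) ℝ) : ℝ :=
  Real.sqrt (∑ i, ∑ j, (H i j) ^ 2)

/-- The Frobenius distance from a matrix to a set of matrices. -/
noncomputable def distTo {N C : ℕ} (S : Set (Matrix (Fin N) (Fin C) ℝ))
    (H : Matrix (Fin N) (Fin C) ℝ) : ℝ :=
  sInf ((fun Y => frobNorm (H - Y)) '' S)

lemma herm_bound {N : ℕ} (B : Matrix (Fin N) (Fin N) ℝ) (hB : B.IsHermitian)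
    (lam : ℝ) (hlam : 0 ≤ lam)
    (heig : ∀ (μ : ℝ) (v : Fin N → ℝ), v ≠ 0 → B.mulVec v = μ • v → |μ| ≤ lam)
    (v : Fin N → ℝ) :
    ∑ i, (B.mulVec v i)^2 ≤ lam^2 * ∑ i, (v i)^2 := by
  classical
  set b := hB.eigenvectorBasis with hb
  set μ := hB.eigenvalues with hμ
  set w : EuclideanSpace ℝ (Fin N) := WithLp.toLp 2 v with hw
  set c : EuclideanSpace ℝ (Fin N) := b.repr w with hc
  set u : EuclideanSpace ℝ (Fin N) := WithLp.toLp 2 (B.mulVec v) with hu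
  have hsum : ∑ i, c i • b i = w := b.sum_repr w
  have hμle : ∀ i, |μ i| ≤ lam := fun i => by
    refine heig (μ i) (b i) ?_ (hB.mulVec_eigenvectorBasis i)
    intro h0
    have h1 : ‖b i‖ = 1 := b.orthonormal.1 i
    rw [show (b i : EuclideanSpace ℝ (Fin N)) = 0 from (WithLp.ofLp_eq_zero 2).1 h0] at h1
    simp at h1
  have hmul : u = ∑ i, (μ i * c i) • b i := by
    have h1 : B.mulVec v = B.mulVecLin (∑ i, c i • (b i : Fin N → ℝ)) := by
      exact congrArg _ (by have := congrArg WithLp.ofLp hsum.symm; simpa only [hw, WithLp.ofLp_sum, WithLp.ofLp_smul, WithLp.ofLp_toLp] using this)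
    apply WithLp.ofLp_injective 2
    simp only [hu, WithLp.ofLp_toLp, WithLp.ofLp_sum, WithLp.ofLp_smul]
    rw [h1, map_sum]
    refine Finset.sum_congr rfl fun i _ => ?_
    rw [_root_.map_smul, Matrix.mulVecLin_apply]
    have h5 : B *ᵥ (b i : Fin N → ℝ) = μ i • (b i : Fin N → ℝ) := hB.mulVec_eigenvectorBasis i
    rw [h5, smul_smul, mul_comm]
  have hrepr : b.repr u = fun j => μ j * c j := by
    rw [hmul, map_sum]
    funext j
    simp only [_root_.map_smul, b.repr_self]
    rw [WithLp.ofLp_sum, Finset.sum_apply]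
    simp [EuclideanSpace.single_apply]
  have normsq : ∀ x : EuclideanSpace ℝ (Fin N), ‖x‖^2 = ∑ i, (x i)^2 := fun x => by
    rw [EuclideanSpace.norm_eq, Real.sq_sqrt (by positivity)]
    simp [Real.norm_eq_abs, sq_abs]
  have key : ∑ i, (u i)^2 = ∑ i, (μ i * c i)^2 := by
    have h2 : ‖u‖ = ‖b.repr u‖ := (b.repr.norm_map _).symm
    have h3 := congrArg (· ^ 2) h2
    simp only [normsq] at h3
    rw [hrepr] at h3
    exact h3
  have keyv : ∑ i, (v i)^2 = ∑ i, (c i)^2 := by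
    have h2 : ‖w‖ = ‖b.repr w‖ := (b.repr.norm_map _).symm
    have h3 := congrArg (· ^ 2) h2
    simp only [normsq] at h3
    exact h3
  show ∑ i, (u i)^2 ≤ _
  rw [key, keyv, Finset.mul_sum]
  refine Finset.sum_le_sum fun i _ => ?_
  have h4 : (μ i)^2 ≤ lam^2 := by
    have := hμle i
    nlinarith [abs_nonneg (μ i), sq_abs (μ i)]
  nlinarith [sq_nonneg (c i)]

lemma frob_bound {N C : ℕ} (B : Matrix (Fin N) (Fin N) ℝ) (hB : B.IsHermitian)
    (lam : ℝ) (hlam : 0 ≤ lam)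
    (heig : ∀ (μ : ℝ) (v : Fin N → ℝ), v ≠ 0 → B.mulVec v = μ • v → |μ| ≤ lam)
    (X : Matrix (Fin N) (Fin C) ℝ) :
    frobNorm (B * X) ≤ lam * frobNorm X := by
  unfold frobNorm
  have h1 : ∑ i, ∑ j, ((B * X) i j)^2 ≤ lam^2 * ∑ i, ∑ j, (X i j)^2 := by
    rw [Finset.sum_comm, Finset.sum_comm (γ := Fin N), Finset.mul_sum]
    refine Finset.sum_le_sum fun j _ => ?_
    have h2 : ∀ i, (B * X) i j = B.mulVec (fun k => X k j) i := fun i => by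
      simp [Matrix.mul_apply, Matrix.mulVec, dotProduct]
    calc ∑ i, ((B * X) i j)^2 = ∑ i, (B.mulVec (fun k => X k j) i)^2 := by
          refine Finset.sum_congr rfl fun i _ => by rw [h2]
      _ ≤ lam^2 * ∑ i, (X i j)^2 := herm_bound B hB lam hlam heig _
  calc Real.sqrt (∑ i, ∑ j, ((B * X) i j)^2)
      ≤ Real.sqrt (lam^2 * ∑ i, ∑ j, (X i j)^2) := Real.sqrt_le_sqrt h1
    _ = lam * Real.sqrt (∑ i, ∑ j, (X i j)^2) := by
        rw [Real.sqrt_mul (sq_nonneg lam), Real.sqrt_sq hlam]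

/-- For a symmetric `Â` whose eigenvalue-1 eigenspace is the column span of the
orthonormal `Ê`, and all other eigenvalues obey `|μ| ≤ λ < 1`, we have
`d_M(ÂH) ≤ λ · d_M(H)`. -/
theorem dist_to_subspace_mul_adjacency
    (N M C : ℕ) (hatA : Matrix (Fin N) (Fin N) ℝ) (hsymm : hatA.IsSymm)
    (E : Matrix (Fin N) (Fin M) ℝ) (hortho : Eᵀ * E = 1)
    (lam : ℝ) (hlam0 : 0 ≤ lam) (hlam1 : lam < 1)
    (hEig1 : ∀ v : Fin N → ℝ, hatA.mulVec v = v ↔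
      v ∈ Submodule.span ℝ (Set.range fun m => fun i => E i m))
    (hOther : ∀ (μ : ℝ) (v : Fin N → ℝ), v ≠ 0 → hatA.mulVec v = μ • v →
      μ = 1 ∨ |μ| ≤ lam)
    (MS : Set (Matrix (Fin N) (Fin C) ℝ))
    (hMS : MS = {H | ∃ Cm : Matrix (Fin M) (Fin C) ℝ, H = E * Cm})
    (H : Matrix (Fin N) (Fin C) ℝ) :
    distTo MS (hatA * H) ≤ lam * distTo MS H := by
  classical
  set P : Matrix (Fin N) (Fin N) ℝ := E * Eᵀ with hP
  -- hatA * E = E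
  have hAE : hatA * E = E := by
    ext i m
    have hmem : (fun k => E k m) ∈ Submodule.span ℝ (Set.range fun m => fun i => E i m) :=
      Submodule.subset_span ⟨m, rfl⟩
    have := (hEig1 (fun k => E k m)).2 hmem
    calc (hatA * E) i m = hatA.mulVec (fun k => E k m) i := by
          simp [Matrix.mul_apply, Matrix.mulVec, dotProduct]
      _ = E i m := by rw [this]
  have hAP : hatA * P = P := by rw [hP, ← Matrix.mul_assoc, hAE]
  have hPsymm : Pᵀ = P := by rw [hP, Matrix.transpose_mul, Matrix.transpose_transpose]
  have hPA : P * hatA = P := by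
    have h := congrArg Matrix.transpose hAP
    rwa [Matrix.transpose_mul, hPsymm, hsymm.eq] at h
  have hPP : P * P = P := by
    rw [hP, Matrix.mul_assoc, ← Matrix.mul_assoc Eᵀ, hortho, Matrix.one_mul]
  set B : Matrix (Fin N) (Fin N) ℝ := hatA - P with hB
  have hBsym : B.IsHermitian := by
    have h1 : hatA.IsHermitian := by
      rw [Matrix.IsHermitian, Matrix.conjTranspose_eq_transpose_of_trivial, hsymm.eq]
    have h2 : P.IsHermitian := by
      rw [Matrix.IsHermitian, Matrix.conjTranspose_eq_transpose_of_trivial, hPsymm]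
    exact h1.sub h2
  -- eigenvalue bound for B
  have heig : ∀ (μ : ℝ) (v : Fin N → ℝ), v ≠ 0 → B.mulVec v = μ • v → |μ| ≤ lam := by
    intro μ v hv0 hBv
    rcases eq_or_ne μ 0 with h0 | h0
    · simpa [h0] using hlam0
    have hBv' : hatA.mulVec v - P.mulVec v = μ • v := by
      rw [← Matrix.sub_mulVec, ← hB]; exact hBv
    -- apply P
    have hPv : μ • P.mulVec v = 0 := by
      have := congrArg P.mulVec hBv'
      rw [Matrix.mulVec_smul, Matrix.mulVec_sub, Matrix.mulVec_mulVec,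
        Matrix.mulVec_mulVec, hPA, hPP, sub_self] at this
      exact this.symm
    have hPv0 : P.mulVec v = 0 := by
      rcases smul_eq_zero.1 hPv with h | h
      · exact absurd h h0
      · exact h
    have hAv : hatA.mulVec v = μ • v := by
      rw [← hBv']
      rw [hPv0, sub_zero]
    rcases hOther μ v hv0 hAv with h1 | h1
    · -- μ = 1 leads to contradiction
      exfalso
      have hfix : hatA.mulVec v = v := by rw [hAv, h1, one_smul]
      obtain ⟨c, hc⟩ := (Submodule.mem_span_range_iff_exists_fun ℝ).1 ((hEig1 v).1 hfix)
      have hvE : v = E.mulVec c := by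
        rw [← hc]
        funext i
        rw [Finset.sum_apply]
        simp [Matrix.mulVec, dotProduct, mul_comm]
      have : P.mulVec v = v := by
        rw [hvE, Matrix.mulVec_mulVec, hP, Matrix.mul_assoc, hortho, Matrix.mul_one]
      rw [hPv0] at this
      exact hv0 this.symm
    · exact h1
  -- main argument
  have hkey : ∀ Y ∈ MS, ∃ Y' ∈ MS,
      frobNorm (hatA * H - Y') ≤ lam * frobNorm (H - Y) := by
    intro Y hY
    rw [hMS] at hY
    obtain ⟨Cm, rfl⟩ := hY
    refine ⟨E * Cm + P * (hatA * (H - E * Cm)), ?_, ?_⟩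
    · rw [hMS]
      exact ⟨Cm + Eᵀ * (hatA * (H - E * Cm)), by
        rw [Matrix.mul_add, hP, Matrix.mul_assoc]⟩
    · have halg : hatA * H - (E * Cm + P * (hatA * (H - E * Cm))) = B * (H - E * Cm) := by
        have h1 : P * (hatA * (H - E * Cm)) = P * (H - E * Cm) := by
          rw [← Matrix.mul_assoc, hPA]
        rw [h1, hB, Matrix.sub_mul, Matrix.mul_sub hatA, ← Matrix.mul_assoc hatA E, hAE]
        abel
      rw [halg]
      exact frob_bound B hBsym lam hlam0 heig _
  -- non-emptiness and boundedness
  have hMS0 : (0 : Matrix (Fin N) (Fin C) ℝ) ∈ MS := by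
    rw [hMS]; exact ⟨0, by rw [Matrix.mul_zero]⟩
  have hne : ∀ G : Matrix (Fin N) (Fin C) ℝ,
      ((fun Y => frobNorm (G - Y)) '' MS).Nonempty := fun G => ⟨_, ⟨0, hMS0, rfl⟩⟩
  have hbdd : ∀ G : Matrix (Fin N) (Fin C) ℝ,
      BddBelow ((fun Y => frobNorm (G - Y)) '' MS) := fun G =>
    ⟨0, fun x ⟨Y, _, hxY⟩ => hxY ▸ Real.sqrt_nonneg _⟩
  unfold distTo
  rw [show lam * sInf ((fun Y => frobNorm (H - Y)) '' MS)
      = sInf (lam • ((fun Y => frobNorm (H - Y)) '' MS)) from by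
    rw [Real.sInf_smul_of_nonneg hlam0, smul_eq_mul]]
  refine le_csInf (((hne H).smul_set)) ?_
  rintro x ⟨r, ⟨Y, hYMS, rfl⟩, rfl⟩
  obtain ⟨Y', hY'MS, hle⟩ := hkey Y hYMS
  calc sInf ((fun Y => frobNorm (hatA * H - Y)) '' MS)
      ≤ frobNorm (hatA * H - Y') := csInf_le (hbdd _) ⟨Y', hY'MS, rfl⟩
    _ ≤ lam * frobNorm (H - Y) := hle
    _ = lam • frobNorm (H - Y) := rfl
end

section
/- Let M = {ÊC : C ∈ ℝ^{M×C}} where Ê ∈ ℝ^{N×M} has entrywise non-negative entries (e.g., Ê = (D+I)^{1/2}U with U a 0/1 indicator matrix of connected components with orthogonal columns). Let σ denote entrywise ReLU. Then for any H ∈ ℝ^{N×C}, d_M(σ(H)) ≤ d_M(H). -/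
open Matrix

/-- Entrywise ReLU of a matrix. -/
def relu {N C : ℕ} (H : Matrix (Fin N) (Fin C) ℝ) : Matrix (Fin N) (Fin C) ℝ :=
  Matrix.of fun i j => max (H i j) 0

lemma relu_mul_comm {N M C : ℕ} (E : Matrix (Fin N) (Fin M) ℝ)
    (hnonneg : ∀ i m, 0 ≤ E i m)
    (hdisj : ∀ i m m', E i m ≠ 0 → E i m' ≠ 0 → m = m')
    (Cm : Matrix (Fin M) (Fin C) ℝ) :
    relu (E * Cm) = E * relu Cm := by
  ext i j
  simp only [relu, Matrix.mul_apply, Matrix.of_apply]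
  by_cases h : ∀ m, E i m = 0
  · simp [h]
  · push_neg at h
    obtain ⟨m0, hm0⟩ := h
    have hsum1 : ∑ m, E i m * Cm m j = E i m0 * Cm m0 j := by
      apply Finset.sum_eq_single
      · intro m _ hm
        by_cases hE : E i m = 0
        · simp [hE]
        · exact absurd (hdisj i m m0 hE hm0) hm
      · intro h; exact absurd (Finset.mem_univ m0) h
    have hsum2 : ∑ m, E i m * max (Cm m j) 0 = E i m0 * max (Cm m0 j) 0 := by
      apply Finset.sum_eq_single
      · intro m _ hm
        by_cases hE : E i m = 0
        · simp [hE]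
        · exact absurd (hdisj i m m0 hE hm0) hm
      · intro h; exact absurd (Finset.mem_univ m0) h
    rw [hsum1, hsum2]
    rw [mul_max_of_nonneg _ _ (hnonneg i m0), mul_zero]

/-- If `Ê` has non-negative entries whose columns have disjoint supports
(indicators of connected components scaled by positive degrees), then the
distance to `M = {ÊC}` is non-expansive under entrywise ReLU:
`d_M(σ(H)) ≤ d_M(H)`. -/
theorem dist_to_subspace_relu_nonexpansive
    (N M C : ℕ) (E : Matrix (Fin N) (Fin M) ℝ)
    (hnonneg : ∀ i m, 0 ≤ E i m)
    (hdisj : ∀ i m m', E i m ≠ 0 → E i m' ≠ 0 → m = m')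
    (MS : Set (Matrix (Fin N) (Fin C) ℝ))
    (hMS : MS = {H | ∃ Cm : Matrix (Fin M) (Fin C) ℝ, H = E * Cm})
    (H : Matrix (Fin N) (Fin C) ℝ) :
    distTo MS (relu H) ≤ distTo MS H := by
  subst hMS
  have hbdd : BddBelow ((fun Y => frobNorm (relu H - Y)) ''
      {H | ∃ Cm : Matrix (Fin M) (Fin C) ℝ, H = E * Cm}) := by
    refine ⟨0, ?_⟩
    rintro r ⟨Y, _, rfl⟩
    exact Real.sqrt_nonneg _
  apply le_csInf
  · exact ⟨frobNorm (H - E * 0), ⟨E * 0, ⟨0, rfl⟩, rfl⟩⟩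
  · rintro r ⟨Y, ⟨Cm, rfl⟩, rfl⟩
    have hmem : relu (E * Cm) ∈ {H | ∃ Cm : Matrix (Fin M) (Fin C) ℝ, H = E * Cm} := by
      exact ⟨relu Cm, relu_mul_comm E hnonneg hdisj Cm⟩
    calc distTo {H | ∃ Cm : Matrix (Fin M) (Fin C) ℝ, H = E * Cm} (relu H)
        ≤ frobNorm (relu H - relu (E * Cm)) := csInf_le hbdd ⟨relu (E * Cm), hmem, rfl⟩
      _ ≤ frobNorm (H - E * Cm) := by
          apply Real.sqrt_le_sqrt
          apply Finset.sum_le_sum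
          intro i _
          apply Finset.sum_le_sum
          intro j _
          have h1 : |max (H i j) 0 - max ((E * Cm) i j) 0| ≤ |H i j - (E * Cm) i j| :=
            abs_max_sub_max_le_abs _ _ _
          have := mul_self_le_mul_self (abs_nonneg _) h1
          simpa [Matrix.sub_apply, relu, sq, abs_mul_abs_self] using this
end

section
/- Consider the GCN-with-bias layer H_{l+1} = σ(ÂH_lW_l + b_l), with the assumptions of the generic GCN case (contraction factor v = sλ < 1) and suppose d_M(b_l) = c for all l. Set r = c/(1−v). Then d_M(H_{l+1}) − r ≤ v(d_M(H_l) − r), and consequently d_M(H_l) ≤ r + v^l(d_M(H_0) − r); so limsup_{l→∞} d_M(H_l) ≤ r. -/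
open Matrix Filter

namespace GCNOS
variable {N C M : ℕ}

noncomputable def frobSq (H : Matrix (Fin N) (Fin C) ℝ) : ℝ := ∑ i, ∑ j, (H i j) ^ 2

lemma frobSq_nonneg (H : Matrix (Fin N) (Fin C) ℝ) : 0 ≤ frobSq H := by
  apply Finset.sum_nonneg; intros; apply Finset.sum_nonneg; intros; positivity

lemma frobNorm_eq (H : Matrix (Fin N) (Fin C) ℝ) : frobNorm H = Real.sqrt (frobSq H) := rfl

lemma frobNorm_nonneg (H : Matrix (Fin N) (Fin C) ℝ) : 0 ≤ frobNorm H := Real.sqrt_nonneg _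

noncomputable def toE (H : Matrix (Fin N) (Fin C) ℝ) : EuclideanSpace ℝ (Fin N × Fin C) :=
  (WithLp.equiv 2 _).symm (fun p => H p.1 p.2)

lemma norm_toE (H : Matrix (Fin N) (Fin C) ℝ) : ‖toE H‖ = frobNorm H := by
  rw [EuclideanSpace.norm_eq, frobNorm]
  congr 1
  rw [Fintype.sum_prod_type]
  apply Finset.sum_congr rfl
  intro i _
  apply Finset.sum_congr rfl
  intro j _
  rw [Real.norm_eq_abs, sq_abs]
  rfl

lemma frobNorm_add_le (A B : Matrix (Fin N) (Fin C) ℝ) :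
    frobNorm (A + B) ≤ frobNorm A + frobNorm B := by
  have h : toE (A + B) = toE A + toE B := rfl
  rw [← norm_toE, ← norm_toE, ← norm_toE, h]
  exact norm_add_le _ _

lemma frobNorm_mono (A B : Matrix (Fin N) (Fin C) ℝ) (h : ∀ i j, (A i j) ^ 2 ≤ (B i j) ^ 2) :
    frobNorm A ≤ frobNorm B := by
  apply Real.sqrt_le_sqrt
  exact Finset.sum_le_sum fun i _ => Finset.sum_le_sum fun j _ => h i j

lemma frobSq_add_of_orth (D Y : Matrix (Fin N) (Fin C) ℝ)
    (h : ∑ i, ∑ j, D i j * Y i j = 0) :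
    frobSq (D + Y) = frobSq D + frobSq Y := by
  have e : ∀ i j, ((D + Y) i j) ^ 2 = D i j ^ 2 + Y i j ^ 2 + 2 * (D i j * Y i j) := by
    intro i j; simp [Matrix.add_apply]; ring
  simp only [frobSq, e, Finset.sum_add_distrib, ← Finset.mul_sum]
  rw [h]; ring

lemma cross_zero (E : Matrix (Fin N) (Fin M) ℝ) (D : Matrix (Fin N) (Fin C) ℝ)
    (Z : Matrix (Fin M) (Fin C) ℝ) (horth : Eᵀ * D = 0) :
    ∑ i, ∑ j, D i j * (E * Z) i j = 0 := by
  have key : ∀ m j, ∑ i, E i m * D i j = 0 := by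
    intro m j
    have := congrFun (congrFun horth m) j
    simpa [Matrix.mul_apply, Matrix.transpose_apply] using this
  calc ∑ i, ∑ j, D i j * (E * Z) i j
      = ∑ i, ∑ j, ∑ m, E i m * D i j * Z m j := by
        apply Finset.sum_congr rfl; intro i _
        apply Finset.sum_congr rfl; intro j _
        rw [Matrix.mul_apply, Finset.mul_sum]
        apply Finset.sum_congr rfl; intro m _; ring
    _ = ∑ i, ∑ m, ∑ j, E i m * D i j * Z m j := by
        apply Finset.sum_congr rfl; intro i _; exact Finset.sum_comm
    _ = ∑ m, ∑ i, ∑ j, E i m * D i j * Z m j := Finset.sum_comm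
    _ = ∑ m, ∑ j, ∑ i, E i m * D i j * Z m j := by
        apply Finset.sum_congr rfl; intro m _; exact Finset.sum_comm
    _ = ∑ m, ∑ j, (∑ i, E i m * D i j) * Z m j := by
        apply Finset.sum_congr rfl; intro m _
        apply Finset.sum_congr rfl; intro j _
        rw [Finset.sum_mul]
    _ = 0 := by simp [key]

lemma distTo_formula (E : Matrix (Fin N) (Fin M) ℝ) (hortho : Eᵀ * E = 1)
    (X : Matrix (Fin N) (Fin C) ℝ) :
    distTo {H | ∃ Cm : Matrix (Fin M) (Fin C) ℝ, H = E * Cm} X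
      = frobNorm (X - E * (Eᵀ * X)) := by
  have hmem : frobNorm (X - E * (Eᵀ * X)) ∈
      (fun Y => frobNorm (X - Y)) '' {H | ∃ Cm : Matrix (Fin M) (Fin C) ℝ, H = E * Cm} :=
    ⟨E * (Eᵀ * X), ⟨Eᵀ * X, rfl⟩, rfl⟩
  have hbdd : BddBelow ((fun Y => frobNorm (X - Y)) ''
      {H | ∃ Cm : Matrix (Fin M) (Fin C) ℝ, H = E * Cm}) := by
    refine ⟨0, ?_⟩
    rintro z ⟨Y, -, rfl⟩
    exact frobNorm_nonneg _
  apply le_antisymm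
  · exact csInf_le hbdd hmem
  · apply le_csInf ⟨_, hmem⟩
    rintro z ⟨Y, ⟨Cm, rfl⟩, rfl⟩
    show frobNorm _ ≤ frobNorm (X - E * Cm)
    set D := X - E * (Eᵀ * X) with hD
    have horth : Eᵀ * D = 0 := by
      rw [hD, Matrix.mul_sub, ← Matrix.mul_assoc, ← Matrix.mul_assoc, hortho,
        Matrix.one_mul, sub_self]
    have key : X - E * Cm = D + E * ((Eᵀ * X) - Cm) := by
      rw [hD, Matrix.mul_sub]; abel
    rw [key, frobNorm_eq, frobNorm_eq,
      frobSq_add_of_orth D _ (cross_zero E D _ horth)]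
    apply Real.sqrt_le_sqrt
    linarith [frobSq_nonneg (E * ((Eᵀ * X) - Cm))]

lemma relu_mem (E : Matrix (Fin N) (Fin M) ℝ) (hnonneg : ∀ i m, 0 ≤ E i m)
    (hdisj : ∀ i m m', E i m ≠ 0 → E i m' ≠ 0 → m = m')
    (Cm : Matrix (Fin M) (Fin C) ℝ) :
    relu (E * Cm) = E * Matrix.of fun m j => max (Cm m j) 0 := by
  ext i j
  simp only [relu, Matrix.of_apply, Matrix.mul_apply]
  by_cases hex : ∃ m0, E i m0 ≠ 0
  · obtain ⟨m0, hm0⟩ := hex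
    have h1 : ∑ m, E i m * Cm m j = E i m0 * Cm m0 j := by
      apply Finset.sum_eq_single
      · intro m _ hm
        by_cases h : E i m = 0
        · rw [h, zero_mul]
        · exact absurd (hdisj i m m0 h hm0) hm
      · intro h; exact absurd (Finset.mem_univ m0) h
    have h2 : ∑ m, E i m * max (Cm m j) 0 = E i m0 * max (Cm m0 j) 0 := by
      apply Finset.sum_eq_single
      · intro m _ hm
        by_cases h : E i m = 0
        · rw [h, zero_mul]
        · exact absurd (hdisj i m m0 h hm0) hm
      · intro h; exact absurd (Finset.mem_univ m0) h
    rw [h1, h2, mul_max_of_nonneg _ _ (hnonneg i m0), mul_zero, max_comm]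
  · push_neg at hex
    simp [hex]

lemma distTo_relu_le (E : Matrix (Fin N) (Fin M) ℝ) (hortho : Eᵀ * E = 1)
    (hnonneg : ∀ i m, 0 ≤ E i m)
    (hdisj : ∀ i m m', E i m ≠ 0 → E i m' ≠ 0 → m = m')
    (X : Matrix (Fin N) (Fin C) ℝ) :
    distTo {H | ∃ Cm : Matrix (Fin M) (Fin C) ℝ, H = E * Cm} (relu X)
      ≤ distTo {H | ∃ Cm : Matrix (Fin M) (Fin C) ℝ, H = E * Cm} X := by
  rw [distTo_formula E hortho X]
  have hmem : relu (E * (Eᵀ * X)) ∈ {H | ∃ Cm : Matrix (Fin M) (Fin C) ℝ, H = E * Cm} :=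
    ⟨_, relu_mem E hnonneg hdisj (Eᵀ * X)⟩
  have hbdd : BddBelow ((fun Y => frobNorm (relu X - Y)) ''
      {H | ∃ Cm : Matrix (Fin M) (Fin C) ℝ, H = E * Cm}) := by
    refine ⟨0, ?_⟩
    rintro z ⟨Y, -, rfl⟩
    exact frobNorm_nonneg _
  calc distTo _ (relu X) ≤ frobNorm (relu X - relu (E * (Eᵀ * X))) :=
        csInf_le hbdd ⟨_, hmem, rfl⟩
    _ ≤ frobNorm (X - E * (Eᵀ * X)) := by
        apply frobNorm_mono
        intro i j
        rw [← sq_abs ((relu X - relu (E * (Eᵀ * X))) i j),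
          ← sq_abs ((X - E * (Eᵀ * X)) i j)]
        refine pow_le_pow_left₀ (abs_nonneg _) ?_ 2
        simp only [Matrix.sub_apply]
        simpa [relu] using abs_max_sub_max_le_abs (X i j) ((E * (Eᵀ * X)) i j) 0

lemma euc_normsq {n : ℕ} (w : EuclideanSpace ℝ (Fin n)) : ‖w‖ ^ 2 = ∑ i, (w i) ^ 2 := by
  have h : ‖w‖ ^ 2 = ∑ i, ‖w i‖ ^ 2 := by
    rw [EuclideanSpace.norm_eq]
    exact Real.sq_sqrt (by positivity)
  simpa [Real.norm_eq_abs, sq_abs] using h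

lemma opBound {n : ℕ} (B : Matrix (Fin n) (Fin n) ℝ) (hB : B.IsHermitian) (lam : ℝ)
    (heig : ∀ k, |hB.eigenvalues k| ≤ lam) (x : Fin n → ℝ) :
    ∑ i, (B.mulVec x i) ^ 2 ≤ lam ^ 2 * ∑ i, (x i) ^ 2 := by
  have hBT : Bᵀ = B := hB
  set bas := hB.eigenvectorBasis with hbas
  set y : EuclideanSpace ℝ (Fin n) := (WithLp.equiv 2 _).symm x with hy
  set z : EuclideanSpace ℝ (Fin n) := (WithLp.equiv 2 _).symm (B.mulVec x) with hz
  have hrepr : ∀ k, bas.repr z k = hB.eigenvalues k * bas.repr y k := by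
    intro k
    rw [bas.repr_apply_apply, bas.repr_apply_apply,
      EuclideanSpace.inner_eq_star_dotProduct, EuclideanSpace.inner_eq_star_dotProduct]
    have h1 : z.ofLp = B.mulVec x := rfl
    have h2 : y.ofLp = x := rfl
    rw [h1, h2]
    have hsd : ∀ u v : Fin n → ℝ, dotProduct (star u) v = dotProduct u v := by
      intro u v; rfl
    simp only [star_trivial]
    rw [dotProduct_comm (B *ᵥ x), dotProduct_comm x, Matrix.dotProduct_mulVec,
      ← Matrix.mulVec_transpose, hBT, hB.mulVec_eigenvectorBasis]
    simp [smul_dotProduct, hbas]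
  have hznorm : ∑ i, (B.mulVec x i) ^ 2 = ∑ k, (bas.repr z k) ^ 2 := by
    have := euc_normsq z
    rw [← bas.repr.norm_map z, euc_normsq (bas.repr z)] at this
    exact this.symm.trans rfl
  have hynorm : ∑ i, (x i) ^ 2 = ∑ k, (bas.repr y k) ^ 2 := by
    have := euc_normsq y
    rw [← bas.repr.norm_map y, euc_normsq (bas.repr y)] at this
    exact this.symm.trans rfl
  rw [hznorm, hynorm, Finset.mul_sum]
  apply Finset.sum_le_sum
  intro k _
  rw [hrepr k, mul_pow]
  apply mul_le_mul_of_nonneg_right _ (sq_nonneg _)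
  calc hB.eigenvalues k ^ 2 = |hB.eigenvalues k| ^ 2 := (sq_abs _).symm
    _ ≤ lam ^ 2 := pow_le_pow_left₀ (abs_nonneg _) (heig k) 2

section Eig
variable (hatA : Matrix (Fin N) (Fin N) ℝ) (E : Matrix (Fin N) (Fin M) ℝ)

lemma eig_bound (hsymm : hatA.IsSymm) (hortho : Eᵀ * E = 1)
    (lam : ℝ) (hlam0 : 0 ≤ lam)
    (hEig1 : ∀ v : Fin N → ℝ, hatA.mulVec v = v ↔
      v ∈ Submodule.span ℝ (Set.range fun m => fun i => E i m))
    (hOther : ∀ (μ : ℝ) (v : Fin N → ℝ), v ≠ 0 → hatA.mulVec v = μ • v →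
      μ = 1 ∨ |μ| ≤ lam)
    (hB : (hatA - E * Eᵀ).IsHermitian) :
    ∀ k, |hB.eigenvalues k| ≤ lam := by
  set P := E * Eᵀ with hP
  have hPE : P * E = E := by rw [hP, Matrix.mul_assoc, hortho, Matrix.mul_one]
  have hAE : hatA * E = E := by
    ext i m
    have hmem : (fun i => E i m) ∈ Submodule.span ℝ (Set.range fun m => fun i => E i m) :=
      Submodule.subset_span ⟨m, rfl⟩
    have := congrFun ((hEig1 (fun i => E i m)).2 hmem) i
    simpa [Matrix.mulVec, dotProduct, Matrix.mul_apply] using this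
  have hAP : hatA * P = P := by rw [hP, ← Matrix.mul_assoc, hAE]
  have hPsymm : Pᵀ = P := by rw [hP, Matrix.transpose_mul, Matrix.transpose_transpose]
  have hPA : P * hatA = P := by
    have h1 : (hatA * P)ᵀ = Pᵀ * hatAᵀ := Matrix.transpose_mul _ _
    rw [hAP, hPsymm, hsymm] at h1
    exact h1.symm
  have hPP : P * P = P := by
    rw [hP, Matrix.mul_assoc, ← Matrix.mul_assoc Eᵀ, hortho, Matrix.one_mul]
  have hBP : (hatA - P) * P = 0 := by rw [Matrix.sub_mul, hAP, hPP, sub_self]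
  have hPB : P * (hatA - P) = 0 := by rw [Matrix.mul_sub, hPA, hPP, sub_self]
  have hPfix : ∀ u ∈ Submodule.span ℝ (Set.range fun m => fun i => E i m),
      P.mulVec u = u := by
    intro u hu
    induction hu using Submodule.span_induction with
    | mem u hu =>
      obtain ⟨m, rfl⟩ := hu
      funext i
      have := congrFun (congrFun hPE i) m
      simpa [Matrix.mulVec, dotProduct, Matrix.mul_apply] using this
    | zero => simp
    | add u w _ _ hu hw => rw [Matrix.mulVec_add, hu, hw]
    | smul a u _ hu => rw [Matrix.mulVec_smul, hu]
  intro k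
  set μ := hB.eigenvalues k with hμ
  set w : Fin N → ℝ := ⇑(hB.eigenvectorBasis k) with hw
  have hBw : (hatA - P).mulVec w = μ • w := hB.mulVec_eigenvectorBasis k
  have hwne : w ≠ 0 := by
    intro h
    have : hB.eigenvectorBasis k = 0 := by
      apply (WithLp.equiv 2 _).injective
      exact h
    exact hB.eigenvectorBasis.orthonormal.ne_zero k this
  by_cases hμ0 : μ = 0
  · rw [hμ0]; simpa using hlam0
  · have hPw : P.mulVec w = 0 := by
      have h1 : P.mulVec ((hatA - P).mulVec w) = 0 := by
        rw [Matrix.mulVec_mulVec, hPB, Matrix.zero_mulVec]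
      rw [hBw, Matrix.mulVec_smul] at h1
      exact (smul_eq_zero.1 h1).resolve_left hμ0
    have hAw : hatA.mulVec w = μ • w := by
      have : hatA.mulVec w - P.mulVec w = μ • w := by
        rw [← Matrix.sub_mulVec]; exact hBw
      rw [hPw, sub_zero] at this
      exact this
    rcases hOther μ w hwne hAw with h1 | h2
    · exfalso
      rw [h1, one_smul] at hAw
      have hmem := (hEig1 w).1 hAw
      have := hPfix w hmem
      rw [hPw] at this
      exact hwne this.symm
    · exact h2

end Eig

lemma frobNorm_mul_left (B : Matrix (Fin N) (Fin N) ℝ) (lam : ℝ) (hlam : 0 ≤ lam)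
    (hop : ∀ x : Fin N → ℝ, ∑ i, (B.mulVec x i) ^ 2 ≤ lam ^ 2 * ∑ i, (x i) ^ 2)
    (Z : Matrix (Fin N) (Fin C) ℝ) : frobNorm (B * Z) ≤ lam * frobNorm Z := by
  have hsq : frobSq (B * Z) ≤ lam ^ 2 * frobSq Z := by
    have l1 : frobSq (B * Z) = ∑ j, ∑ i, ((B * Z) i j) ^ 2 := Finset.sum_comm
    have l2 : frobSq Z = ∑ j, ∑ i, (Z i j) ^ 2 := Finset.sum_comm
    rw [l1, l2, Finset.mul_sum]
    apply Finset.sum_le_sum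
    intro j _
    have := hop (fun k => Z k j)
    have he : ∀ i, (B * Z) i j = B.mulVec (fun k => Z k j) i := by
      intro i; rfl
    simpa [he] using this
  rw [frobNorm_eq, frobNorm_eq]
  have h := Real.sqrt_le_sqrt hsq
  rwa [Real.sqrt_mul (sq_nonneg lam), Real.sqrt_sq hlam] at h

lemma frobNorm_mul_right (W0 : Matrix (Fin C) (Fin C) ℝ) (s : ℝ) (hs : 0 ≤ s)
    (hW : ∀ x : Fin C → ℝ, ∑ j, (Matrix.vecMul x W0 j) ^ 2 ≤ s ^ 2 * ∑ j, (x j) ^ 2)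
    (Y : Matrix (Fin N) (Fin C) ℝ) : frobNorm (Y * W0) ≤ s * frobNorm Y := by
  have hsq : frobSq (Y * W0) ≤ s ^ 2 * frobSq Y := by
    rw [frobSq, frobSq, Finset.mul_sum]
    apply Finset.sum_le_sum
    intro i _
    have := hW (fun k => Y i k)
    have he : ∀ j, (Y * W0) i j = Matrix.vecMul (fun k => Y i k) W0 j := by
      intro j; rfl
    simpa [he] using this
  rw [frobNorm_eq, frobNorm_eq]
  have h := Real.sqrt_le_sqrt hsq
  rwa [Real.sqrt_mul (sq_nonneg s), Real.sqrt_sq hs] at h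

lemma contraction_step (hatA : Matrix (Fin N) (Fin N) ℝ) (E : Matrix (Fin N) (Fin M) ℝ)
    (hsymm : hatA.IsSymm) (hortho : Eᵀ * E = 1)
    (lam : ℝ) (hlam0 : 0 ≤ lam)
    (hEig1 : ∀ v : Fin N → ℝ, hatA.mulVec v = v ↔
      v ∈ Submodule.span ℝ (Set.range fun m => fun i => E i m))
    (hOther : ∀ (μ : ℝ) (v : Fin N → ℝ), v ≠ 0 → hatA.mulVec v = μ • v →
      μ = 1 ∨ |μ| ≤ lam)
    (s : ℝ) (hs : 0 ≤ s) (W0 : Matrix (Fin C) (Fin C) ℝ)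
    (hW : ∀ x : Fin C → ℝ, ∑ j, (Matrix.vecMul x W0 j) ^ 2 ≤ s ^ 2 * ∑ j, (x j) ^ 2)
    (X : Matrix (Fin N) (Fin C) ℝ) :
    frobNorm (hatA * X * W0 - E * (Eᵀ * (hatA * X * W0)))
      ≤ s * lam * frobNorm (X - E * (Eᵀ * X)) := by
  set P := E * Eᵀ with hP
  have hPE : P * E = E := by rw [hP, Matrix.mul_assoc, hortho, Matrix.mul_one]
  have hAE : hatA * E = E := by
    ext i m
    have hmem : (fun i => E i m) ∈ Submodule.span ℝ (Set.range fun m => fun i => E i m) :=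
      Submodule.subset_span ⟨m, rfl⟩
    have := congrFun ((hEig1 (fun i => E i m)).2 hmem) i
    simpa [Matrix.mulVec, dotProduct, Matrix.mul_apply] using this
  have hAP : hatA * P = P := by rw [hP, ← Matrix.mul_assoc, hAE]
  have hPsymm : Pᵀ = P := by rw [hP, Matrix.transpose_mul, Matrix.transpose_transpose]
  have hPA : P * hatA = P := by
    have h1 : (hatA * P)ᵀ = Pᵀ * hatAᵀ := Matrix.transpose_mul _ _
    rw [hAP, hPsymm, hsymm] at h1
    exact h1.symm
  have hBherm : (hatA - P).IsHermitian := by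
    show (hatA - P)ᵀ = hatA - P
    rw [Matrix.transpose_sub, hsymm, hPsymm]
  have heig := eig_bound hatA E hsymm hortho lam hlam0 hEig1 hOther hBherm
  have hop := opBound (hatA - P) hBherm lam heig
  have hAY : hatA * (E * (Eᵀ * X)) = E * (Eᵀ * X) := by rw [← Matrix.mul_assoc, hAE]
  have hPY : P * (E * (Eᵀ * X)) = E * (Eᵀ * X) := by rw [← Matrix.mul_assoc, hPE]
  have hPX : P * X = E * (Eᵀ * X) := by rw [hP, Matrix.mul_assoc]
  have e1 : E * (Eᵀ * (hatA * X * W0)) = P * hatA * X * W0 := by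
    simp only [← Matrix.mul_assoc, hP]
  have e2 : (hatA - P) * (X - E * (Eᵀ * X)) = hatA * X - P * X := by
    rw [Matrix.sub_mul, Matrix.mul_sub, Matrix.mul_sub, hAY, hPY, sub_sub_sub_cancel_right]
  have key : hatA * X * W0 - E * (Eᵀ * (hatA * X * W0))
      = ((hatA - P) * (X - E * (Eᵀ * X))) * W0 := by
    rw [e1, hPA, e2, Matrix.sub_mul]
  rw [key]
  calc frobNorm (((hatA - P) * (X - E * (Eᵀ * X))) * W0)
      ≤ s * frobNorm ((hatA - P) * (X - E * (Eᵀ * X))) :=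
        frobNorm_mul_right W0 s hs hW _
    _ ≤ s * (lam * frobNorm (X - E * (Eᵀ * X))) := by
        apply mul_le_mul_of_nonneg_left _ hs
        exact frobNorm_mul_left _ lam hlam0 hop _
    _ = s * lam * frobNorm (X - E * (Eᵀ * X)) := by ring

end GCNOS

/-- GCN with bias `H_{l+1} = σ(Â H_l W_l + b_l)` converges to the cuboid
`O(M, r)` with `r = d_M(b)/(1 - sλ)`:
`d_M(H_{l+1}) - r ≤ v (d_M(H_l) - r)`, hence
`d_M(H_l) ≤ r + v^l (d_M(H_0) - r)`, and `limsup d_M(H_l) ≤ r`. -/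
theorem gcn_bias_over_smoothing
    (N M C : ℕ) (hatA : Matrix (Fin N) (Fin N) ℝ) (hsymm : hatA.IsSymm)
    (E : Matrix (Fin N) (Fin M) ℝ) (hortho : Eᵀ * E = 1)
    (hnonneg : ∀ i m, 0 ≤ E i m)
    (hdisj : ∀ i m m', E i m ≠ 0 → E i m' ≠ 0 → m = m')
    (lam : ℝ) (hlam0 : 0 ≤ lam) (hlam1 : lam < 1)
    (hEig1 : ∀ v : Fin N → ℝ, hatA.mulVec v = v ↔
      v ∈ Submodule.span ℝ (Set.range fun m => fun i => E i m))
    (hOther : ∀ (μ : ℝ) (v : Fin N → ℝ), v ≠ 0 → hatA.mulVec v = μ • v →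
      μ = 1 ∨ |μ| ≤ lam)
    (s : ℝ) (hs : 0 ≤ s)
    (W : ℕ → Matrix (Fin C) (Fin C) ℝ)
    (hW : ∀ l, ∀ x : Fin C → ℝ,
      ∑ j, (Matrix.vecMul x (W l) j) ^ 2 ≤ s ^ 2 * ∑ j, (x j) ^ 2)
    (MS : Set (Matrix (Fin N) (Fin C) ℝ))
    (hMS : MS = {H | ∃ Cm : Matrix (Fin M) (Fin C) ℝ, H = E * Cm})
    (b : ℕ → Fin C → ℝ) (c : ℝ)
    (hc : ∀ l, distTo MS (Matrix.of fun _ j => b l j) = c)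
    (v r : ℝ) (hv : v = s * lam) (hv1 : v < 1) (hr : r = c / (1 - v))
    (H : ℕ → Matrix (Fin N) (Fin C) ℝ)
    (hrec : ∀ l, H (l + 1) = relu (hatA * H l * W l + Matrix.of fun _ j => b l j)) :
    (∀ l, distTo MS (H (l + 1)) - r ≤ v * (distTo MS (H l) - r)) ∧
    (∀ l, distTo MS (H l) ≤ r + v ^ l * (distTo MS (H 0) - r)) ∧
    limsup (fun l => distTo MS (H l)) atTop ≤ r := by
  subst hMS
  have hdist : ∀ X : Matrix (Fin N) (Fin C) ℝ,
      distTo {H | ∃ Cm : Matrix (Fin M) (Fin C) ℝ, H = E * Cm} X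
        = frobNorm (X - E * (Eᵀ * X)) := GCNOS.distTo_formula E hortho
  have hv0 : 0 ≤ v := hv ▸ mul_nonneg hs hlam0
  have h1v : 0 < 1 - v := by linarith
  have hrc : r * (1 - v) = c := by rw [hr]; field_simp
  have key : ∀ l,
      distTo {H | ∃ Cm : Matrix (Fin M) (Fin C) ℝ, H = E * Cm} (H (l + 1))
        ≤ v * distTo {H | ∃ Cm : Matrix (Fin M) (Fin C) ℝ, H = E * Cm} (H l) + c := by
    intro l
    rw [hrec l]
    calc distTo _ (relu (hatA * H l * W l + Matrix.of fun _ j => b l j))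
        ≤ distTo {H | ∃ Cm : Matrix (Fin M) (Fin C) ℝ, H = E * Cm}
            (hatA * H l * W l + Matrix.of fun _ j => b l j) :=
          GCNOS.distTo_relu_le E hortho hnonneg hdisj _
      _ ≤ distTo {H | ∃ Cm : Matrix (Fin M) (Fin C) ℝ, H = E * Cm} (hatA * H l * W l)
            + distTo {H | ∃ Cm : Matrix (Fin M) (Fin C) ℝ, H = E * Cm}
                (Matrix.of fun _ j => b l j) := by
          rw [hdist, hdist, hdist]
          have hsplit : (hatA * H l * W l + Matrix.of fun _ j => b l j)
              - E * (Eᵀ * (hatA * H l * W l + Matrix.of fun _ j => b l j))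
              = (hatA * H l * W l - E * (Eᵀ * (hatA * H l * W l)))
                + ((Matrix.of fun _ j => b l j)
                    - E * (Eᵀ * (Matrix.of fun _ j => b l j : Matrix (Fin N) (Fin C) ℝ))) := by
            rw [Matrix.mul_add, Matrix.mul_add]
            abel
          rw [hsplit]
          exact GCNOS.frobNorm_add_le _ _
      _ ≤ v * distTo {H | ∃ Cm : Matrix (Fin M) (Fin C) ℝ, H = E * Cm} (H l) + c := by
          rw [hc l, hdist, hdist, hv]
          exact add_le_add_left
            (GCNOS.contraction_step hatA E hsymm hortho lam hlam0 hEig1 hOther s hs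
              (W l) (hW l) (H l)) c
  have part1 : ∀ l,
      distTo {H | ∃ Cm : Matrix (Fin M) (Fin C) ℝ, H = E * Cm} (H (l + 1)) - r
        ≤ v * (distTo {H | ∃ Cm : Matrix (Fin M) (Fin C) ℝ, H = E * Cm} (H l) - r) := by
    intro l
    have hk := key l
    have hrc' : r - v * r = c := by linear_combination hrc
    have hexp : v * (distTo {H | ∃ Cm : Matrix (Fin M) (Fin C) ℝ, H = E * Cm} (H l) - r)
        = v * distTo {H | ∃ Cm : Matrix (Fin M) (Fin C) ℝ, H = E * Cm} (H l) - v * r := by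
      ring
    linarith
  have part2 : ∀ l,
      distTo {H | ∃ Cm : Matrix (Fin M) (Fin C) ℝ, H = E * Cm} (H l)
        ≤ r + v ^ l * (distTo {H | ∃ Cm : Matrix (Fin M) (Fin C) ℝ, H = E * Cm} (H 0) - r) := by
    intro l
    induction l with
    | zero => simp
    | succ n ih =>
      have h1 := part1 n
      have h2 : v * (distTo {H | ∃ Cm : Matrix (Fin M) (Fin C) ℝ, H = E * Cm} (H n) - r)
          ≤ v * (v ^ n * (distTo {H | ∃ Cm : Matrix (Fin M) (Fin C) ℝ, H = E * Cm} (H 0) - r)) :=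
        mul_le_mul_of_nonneg_left (by linarith) hv0
      have h3 : v ^ (n + 1) * (distTo {H | ∃ Cm : Matrix (Fin M) (Fin C) ℝ, H = E * Cm} (H 0) - r)
          = v * (v ^ n * (distTo {H | ∃ Cm : Matrix (Fin M) (Fin C) ℝ, H = E * Cm} (H 0) - r)) := by
        ring
      linarith
  refine ⟨part1, part2, ?_⟩
  have hf0 : ∀ l, 0 ≤ distTo {H | ∃ Cm : Matrix (Fin M) (Fin C) ℝ, H = E * Cm} (H l) := by
    intro l
    rw [hdist]
    exact GCNOS.frobNorm_nonneg _
  set K := distTo {H | ∃ Cm : Matrix (Fin M) (Fin C) ℝ, H = E * Cm} (H 0) - r with hK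
  have htend : Tendsto (fun l : ℕ => r + v ^ l * K) atTop (nhds r) := by
    have h := tendsto_pow_atTop_nhds_zero_of_lt_one hv0 hv1
    have h2 : Tendsto (fun l : ℕ => r + v ^ l * K) atTop (nhds (r + 0 * K)) :=
      Tendsto.add tendsto_const_nhds (h.mul_const K)
    simpa using h2
  calc limsup (fun l => distTo {H | ∃ Cm : Matrix (Fin M) (Fin C) ℝ, H = E * Cm} (H l)) atTop
      ≤ limsup (fun l : ℕ => r + v ^ l * K) atTop := by
        have hb : Filter.IsBoundedUnder (· ≥ ·) atTop
            (fun l => distTo {H | ∃ Cm : Matrix (Fin M) (Fin C) ℝ, H = E * Cm} (H l)) :=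
          isBoundedUnder_of ⟨0, fun l => hf0 l⟩
        exact limsup_le_limsup (Eventually.of_forall part2)
          hb.isCoboundedUnder_le htend.isBoundedUnder_le
    _ = r := htend.limsup_eq
end

section
/- Consider the ResGCN layer H_{l+1} = σ(ÂH_lW_l) + αH_l, with 0 ≤ α ≤ 1 and the assumptions of the generic GCN case. Then d_M(H_{l+1}) ≤ (sλ + α) d_M(H_l), so if sλ + α < 1 then d_M(H_l) ≤ (sλ+α)^l d_M(H_0) → 0 as l → ∞. -/
open Matrix Filter

section AuxLemmas

open scoped RealInnerProductSpace

lemma enorm_sq' {ι : Type*} [Fintype ι] (w : EuclideanSpace ℝ ι) :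
    ‖w‖ ^ 2 = ∑ i, (w i) ^ 2 := by
  rw [EuclideanSpace.norm_eq, Real.sq_sqrt (by positivity)]
  simp [Real.norm_eq_abs, sq_abs]

lemma einner' {ι : Type*} [Fintype ι] (x y : EuclideanSpace ℝ ι) :
    ⟪x, y⟫ = ∑ i, x i * y i := by
  simp [PiLp.inner_apply]
  exact Finset.sum_congr rfl fun _ _ => mul_comm _ _

lemma parseval' {N : ℕ} (b : OrthonormalBasis (Fin N) ℝ (EuclideanSpace ℝ (Fin N)))
    (v : EuclideanSpace ℝ (Fin N)) : ∑ i, (v i) ^ 2 = ∑ i, (⟪b i, v⟫) ^ 2 := by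
  rw [← enorm_sq', ← b.repr.norm_map v, EuclideanSpace.norm_eq,
    Real.sq_sqrt (by positivity)]
  congr 1; ext i
  rw [b.repr_apply_apply]
  simp [Real.norm_eq_abs, sq_abs]

/-- Embed a matrix into Euclidean space on the product of indices. -/
noncomputable def toE {N C : ℕ} (H : Matrix (Fin N) (Fin C) ℝ) :
    EuclideanSpace ℝ (Fin N × Fin C) := WithLp.toLp 2 (fun p : Fin N × Fin C => H p.1 p.2)

lemma frobNorm_toE {N C : ℕ} (H : Matrix (Fin N) (Fin C) ℝ) :
    frobNorm H = ‖toE H‖ := by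
  rw [frobNorm, EuclideanSpace.norm_eq]
  congr 1
  rw [Fintype.sum_prod_type]
  simp [toE, Real.norm_eq_abs, sq_abs]

lemma toE_sub {N C : ℕ} (X Y : Matrix (Fin N) (Fin C) ℝ) : toE (X - Y) = toE X - toE Y := rfl
lemma toE_add {N C : ℕ} (X Y : Matrix (Fin N) (Fin C) ℝ) : toE (X + Y) = toE X + toE Y := rfl
lemma toE_smul {N C : ℕ} (a : ℝ) (X : Matrix (Fin N) (Fin C) ℝ) : toE (a • X) = a • toE X := rfl

lemma inner_toE_trace {N C : ℕ} (A B : Matrix (Fin N) (Fin C) ℝ) :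
    ⟪toE A, toE B⟫ = Matrix.trace (Aᵀ * B) := by
  rw [einner', Fintype.sum_prod_type]
  have h : Matrix.trace (Aᵀ * B) = ∑ j, ∑ i, A i j * B i j := by
    simp [Matrix.trace, Matrix.diag, Matrix.mul_apply]
  rw [h, Finset.sum_comm]
  simp [toE]

lemma frob_mono {N C : ℕ} {A B : Matrix (Fin N) (Fin C) ℝ}
    (h : ∀ i j, |A i j| ≤ |B i j|) : frobNorm A ≤ frobNorm B := by
  rw [frobNorm, frobNorm]
  apply Real.sqrt_le_sqrt
  refine Finset.sum_le_sum fun i _ => Finset.sum_le_sum fun j _ => ?_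
  calc (A i j) ^ 2 = |A i j| ^ 2 := (sq_abs _).symm
    _ ≤ |B i j| ^ 2 := pow_le_pow_left₀ (abs_nonneg _) (h i j) 2
    _ = (B i j) ^ 2 := sq_abs _

lemma frob_smul {N C : ℕ} (a : ℝ) (X : Matrix (Fin N) (Fin C) ℝ) :
    frobNorm (a • X) = |a| * frobNorm X := by
  rw [frobNorm_toE, frobNorm_toE, toE_smul, norm_smul, Real.norm_eq_abs]

lemma frobNorm_nonneg {N C : ℕ} (X : Matrix (Fin N) (Fin C) ℝ) : 0 ≤ frobNorm X :=
  Real.sqrt_nonneg _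

lemma distTo_le {N C : ℕ} {S : Set (Matrix (Fin N) (Fin C) ℝ)}
    (X : Matrix (Fin N) (Fin C) ℝ) {Y : Matrix (Fin N) (Fin C) ℝ} (hY : Y ∈ S) :
    distTo S X ≤ frobNorm (X - Y) :=
  csInf_le ⟨0, by rintro b ⟨Z, _, rfl⟩; exact frobNorm_nonneg _⟩ ⟨Y, hY, rfl⟩

lemma le_distTo {N C : ℕ} {S : Set (Matrix (Fin N) (Fin C) ℝ)} (hS : S.Nonempty)
    {c : ℝ} {X : Matrix (Fin N) (Fin C) ℝ} (h : ∀ Y ∈ S, c ≤ frobNorm (X - Y)) :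
    c ≤ distTo S X := by
  apply le_csInf (hS.image _)
  rintro b ⟨Y, hY, rfl⟩
  exact h Y hY

lemma distTo_le_mul {N C : ℕ} {S : Set (Matrix (Fin N) (Fin C) ℝ)}
    (h0 : (0 : Matrix (Fin N) (Fin C) ℝ) ∈ S) {c : ℝ}
    {X Z : Matrix (Fin N) (Fin C) ℝ} (hc : 0 ≤ c)
    (h : ∀ Y ∈ S, distTo S Z ≤ c * frobNorm (X - Y)) :
    distTo S Z ≤ c * distTo S X := by
  rcases hc.eq_or_lt with rfl | hc'
  · have := h 0 h0
    simp only [zero_mul] at this ⊢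
    exact this
  · rw [mul_comm, ← div_le_iff₀ hc']
    apply le_distTo ⟨0, h0⟩
    intro Y hY
    rw [div_le_iff₀ hc', mul_comm]
    exact h Y hY

lemma distTo_nonneg' {N C : ℕ} {S : Set (Matrix (Fin N) (Fin C) ℝ)}
    (h0 : (0 : Matrix (Fin N) (Fin C) ℝ) ∈ S) (X : Matrix (Fin N) (Fin C) ℝ) :
    0 ≤ distTo S X :=
  le_distTo ⟨0, h0⟩ fun Y _ => frobNorm_nonneg _

lemma distTo_add_le {N C : ℕ} {S : Set (Matrix (Fin N) (Fin C) ℝ)}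
    (h0 : (0 : Matrix (Fin N) (Fin C) ℝ) ∈ S)
    (hadd : ∀ Y1 ∈ S, ∀ Y2 ∈ S, Y1 + Y2 ∈ S) (X Y : Matrix (Fin N) (Fin C) ℝ) :
    distTo S (X + Y) ≤ distTo S X + distTo S Y := by
  have key : ∀ A ∈ S, ∀ B ∈ S,
      distTo S (X + Y) ≤ frobNorm (X - A) + frobNorm (Y - B) := by
    intro A hA B hB
    refine le_trans (distTo_le _ (hadd A hA B hB)) ?_
    have hsplit : X + Y - (A + B) = (X - A) + (Y - B) := by abel
    rw [hsplit, frobNorm_toE, frobNorm_toE, frobNorm_toE, toE_add]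
    exact norm_add_le _ _
  have h1 : ∀ A ∈ S, distTo S (X + Y) - frobNorm (X - A) ≤ distTo S Y := by
    intro A hA
    apply le_distTo ⟨0, h0⟩
    intro B hB
    linarith [key A hA B hB]
  have h2 : distTo S (X + Y) - distTo S Y ≤ distTo S X := by
    apply le_distTo ⟨0, h0⟩
    intro A hA
    linarith [h1 A hA]
  linarith

set_option maxHeartbeats 1000000 in
lemma spec_vec {N M : ℕ} (hatA : Matrix (Fin N) (Fin N) ℝ) (hsymm : hatA.IsSymm)
    (E : Matrix (Fin N) (Fin M) ℝ) (lam : ℝ)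
    (hEig1 : ∀ v : Fin N → ℝ, hatA.mulVec v = v ↔
      v ∈ Submodule.span ℝ (Set.range fun m => fun i => E i m))
    (hOther : ∀ (μ : ℝ) (v : Fin N → ℝ), v ≠ 0 → hatA.mulVec v = μ • v →
      μ = 1 ∨ |μ| ≤ lam)
    (v : Fin N → ℝ) (hv : ∀ m, ∑ i, E i m * v i = 0) :
    ∑ i, (hatA.mulVec v i) ^ 2 ≤ lam ^ 2 * ∑ i, (v i) ^ 2 := by
  have hA : hatA.IsHermitian := by
    unfold Matrix.IsHermitian
    rw [conjTranspose_eq_transpose_of_trivial]; exact hsymm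
  set b := hA.eigenvectorBasis with hb
  have hvspan : ∀ u : Fin N → ℝ, u ∈ Submodule.span ℝ (Set.range fun m => fun i => E i m) →
      ∑ i, u i * v i = 0 := by
    intro u hu
    induction hu using Submodule.span_induction with
    | mem x hx =>
      obtain ⟨m, rfl⟩ := hx
      exact hv m
    | zero => simp
    | add x y _ _ hx hy =>
      simp only [Pi.add_apply, add_mul, Finset.sum_add_distrib, hx, hy, add_zero]
    | smul a x _ hx =>
      simp only [Pi.smul_apply, smul_eq_mul, mul_assoc, ← Finset.mul_sum, hx, mul_zero]
  have hkey : ∀ i, ⟪b i, (WithLp.toLp 2 (hatA.mulVec v))⟫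
      = hA.eigenvalues i * ⟪b i, (WithLp.toLp 2 v)⟫ := by
    intro i
    rw [einner', einner']
    simp only [WithLp.ofLp_toLp]
    have h2 : ∑ k, b i k * hatA.mulVec v k = (hatA.mulVec (⇑(b i))) ⬝ᵥ v := by
      show (⇑(b i)) ⬝ᵥ (hatA.mulVec v) = _
      rw [dotProduct_mulVec, ← Matrix.mulVec_transpose, hsymm.eq]
    rw [h2, hA.mulVec_eigenvectorBasis i, smul_dotProduct]
    rfl
  have hbd : ∀ i, (hA.eigenvalues i * ⟪b i, (WithLp.toLp 2 v)⟫) ^ 2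
      ≤ lam ^ 2 * (⟪b i, (WithLp.toLp 2 v)⟫) ^ 2 := by
    intro i
    rcases hOther (hA.eigenvalues i) (b i) (by
        have := b.orthonormal.ne_zero i
        exact fun h => this (by ext k; exact congrFun h k))
      (hA.mulVec_eigenvectorBasis i) with h1 | h2
    · have hmem : (⇑(b i) : Fin N → ℝ) ∈ Submodule.span ℝ (Set.range fun m => fun i => E i m) := by
        rw [← hEig1, hA.mulVec_eigenvectorBasis i, h1, one_smul]
      have hz : ⟪b i, (WithLp.toLp 2 v)⟫ = 0 := by
        rw [einner']; exact hvspan (⇑(b i)) hmem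
      simp [hz]
    · rw [mul_pow]
      apply mul_le_mul_of_nonneg_right _ (sq_nonneg _)
      calc hA.eigenvalues i ^ 2 = |hA.eigenvalues i| ^ 2 := (sq_abs _).symm
        _ ≤ lam ^ 2 := pow_le_pow_left₀ (abs_nonneg _) h2 2
  calc ∑ i, (hatA.mulVec v i) ^ 2
      = ∑ i, (⟪b i, (WithLp.toLp 2 (hatA.mulVec v))⟫) ^ 2 := parseval' b (WithLp.toLp 2 (hatA.mulVec v))
    _ = ∑ i, (hA.eigenvalues i * ⟪b i, (WithLp.toLp 2 v)⟫) ^ 2 := by simp_rw [hkey]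
    _ ≤ ∑ i, lam ^ 2 * (⟪b i, (WithLp.toLp 2 v)⟫) ^ 2 :=
        Finset.sum_le_sum fun i _ => hbd i
    _ = lam ^ 2 * ∑ i, (v i) ^ 2 := by rw [← Finset.mul_sum, ← parseval' b]

end AuxLemmas

open scoped RealInnerProductSpace in
/-- ResGCN `H_{l+1} = σ(Â H_l W_l) + α H_l` over-smooths with factor `sλ + α`:
`d_M(H_{l+1}) ≤ (sλ + α) d_M(H_l)`, and if `sλ + α < 1` then
`d_M(H_l) ≤ (sλ + α)^l d_M(H_0) → 0`. -/
theorem resgcn_over_smoothing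
    (N M C : ℕ) (hatA : Matrix (Fin N) (Fin N) ℝ) (hsymm : hatA.IsSymm)
    (E : Matrix (Fin N) (Fin M) ℝ) (hortho : Eᵀ * E = 1)
    (hnonneg : ∀ i m, 0 ≤ E i m)
    (hdisj : ∀ i m m', E i m ≠ 0 → E i m' ≠ 0 → m = m')
    (lam : ℝ) (hlam0 : 0 ≤ lam) (hlam1 : lam < 1)
    (hEig1 : ∀ v : Fin N → ℝ, hatA.mulVec v = v ↔
      v ∈ Submodule.span ℝ (Set.range fun m => fun i => E i m))
    (hOther : ∀ (μ : ℝ) (v : Fin N → ℝ), v ≠ 0 → hatA.mulVec v = μ • v →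
      μ = 1 ∨ |μ| ≤ lam)
    (s : ℝ) (hs : 0 ≤ s)
    (W : ℕ → Matrix (Fin C) (Fin C) ℝ)
    (hW : ∀ l, ∀ x : Fin C → ℝ,
      ∑ j, (Matrix.vecMul x (W l) j) ^ 2 ≤ s ^ 2 * ∑ j, (x j) ^ 2)
    (α : ℝ) (hα0 : 0 ≤ α) (hα1 : α ≤ 1)
    (MS : Set (Matrix (Fin N) (Fin C) ℝ))
    (hMS : MS = {H | ∃ Cm : Matrix (Fin M) (Fin C) ℝ, H = E * Cm})
    (H : ℕ → Matrix (Fin N) (Fin C) ℝ)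
    (hrec : ∀ l, H (l + 1) = relu (hatA * H l * W l) + α • H l) :
    (∀ l, distTo MS (H (l + 1)) ≤ (s * lam + α) * distTo MS (H l)) ∧
    (s * lam + α < 1 →
      (∀ l, distTo MS (H l) ≤ (s * lam + α) ^ l * distTo MS (H 0)) ∧
      Tendsto (fun l => distTo MS (H l)) atTop (nhds 0)) := by
  subst hMS
  have hmem : ∀ Cm : Matrix (Fin M) (Fin C) ℝ,
      E * Cm ∈ {H | ∃ Cm : Matrix (Fin M) (Fin C) ℝ, H = E * Cm} := fun Cm => ⟨Cm, rfl⟩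
  have h0 : (0 : Matrix (Fin N) (Fin C) ℝ) ∈
      {H | ∃ Cm : Matrix (Fin M) (Fin C) ℝ, H = E * Cm} := ⟨0, (Matrix.mul_zero E).symm⟩
  set S := {H | ∃ Cm : Matrix (Fin M) (Fin C) ℝ, H = E * Cm} with hSdef
  -- spectral bound on matrices orthogonal to the subspace
  have hspecM : ∀ R : Matrix (Fin N) (Fin C) ℝ, Eᵀ * R = 0 →
      frobNorm (hatA * R) ≤ lam * frobNorm R := by
    intro R hRo
    have hcol : ∀ j, ∑ i, ((hatA * R) i j) ^ 2 ≤ lam ^ 2 * ∑ i, (R i j) ^ 2 := by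
      intro j
      have hv : ∀ m, ∑ i, E i m * R i j = 0 := by
        intro m
        have := congrFun (congrFun hRo m) j
        simpa [Matrix.mul_apply] using this
      have := spec_vec hatA hsymm E lam hEig1 hOther (fun k => R k j) hv
      simpa [Matrix.mulVec, dotProduct, Matrix.mul_apply] using this
    have hsum : ∑ i, ∑ j, ((hatA * R) i j) ^ 2 ≤ lam ^ 2 * ∑ i, ∑ j, (R i j) ^ 2 := by
      calc ∑ i, ∑ j, ((hatA * R) i j) ^ 2 = ∑ j, ∑ i, ((hatA * R) i j) ^ 2 := Finset.sum_comm
        _ ≤ ∑ j, lam ^ 2 * ∑ i, (R i j) ^ 2 := Finset.sum_le_sum fun j _ => hcol j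
        _ = lam ^ 2 * ∑ j, ∑ i, (R i j) ^ 2 := (Finset.mul_sum _ _ _).symm
        _ = lam ^ 2 * ∑ i, ∑ j, (R i j) ^ 2 := by rw [Finset.sum_comm]
    have h2 := Real.sqrt_le_sqrt hsum
    rw [Real.sqrt_mul (by positivity), Real.sqrt_sq hlam0] at h2
    exact h2
  -- Pythagoras : adding a subspace element does not decrease the norm of an orthogonal matrix
  have hpy : ∀ (R : Matrix (Fin N) (Fin C) ℝ) (Cm : Matrix (Fin M) (Fin C) ℝ),
      Eᵀ * R = 0 → frobNorm R ≤ frobNorm (R + E * Cm) := by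
    intro R Cm hRo
    rw [frobNorm_toE, frobNorm_toE, toE_add]
    have hinner : ⟪toE R, toE (E * Cm)⟫ = 0 := by
      rw [real_inner_comm, inner_toE_trace, Matrix.transpose_mul, Matrix.mul_assoc]
      rw [show Eᵀ * R = 0 from hRo]
      simp
    have hps : ‖toE R + toE (E * Cm)‖ ^ 2
        = ‖toE R‖ ^ 2 + 2 * ⟪toE R, toE (E * Cm)⟫ + ‖toE (E * Cm)‖ ^ 2 :=
      norm_add_sq_real _ _
    have h3 : ‖toE R‖ ^ 2 ≤ ‖toE R + toE (E * Cm)‖ ^ 2 := by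
      rw [hps, hinner]
      nlinarith [sq_nonneg ‖toE (E * Cm)‖]
    calc ‖toE R‖ = Real.sqrt (‖toE R‖ ^ 2) := (Real.sqrt_sq (norm_nonneg _)).symm
      _ ≤ Real.sqrt (‖toE R + toE (E * Cm)‖ ^ 2) := Real.sqrt_le_sqrt h3
      _ = ‖toE R + toE (E * Cm)‖ := Real.sqrt_sq (norm_nonneg _)
  -- Step A : multiplication by hatA contracts by lam
  have stepA : ∀ X : Matrix (Fin N) (Fin C) ℝ,
      distTo S (hatA * X) ≤ lam * distTo S X := by
    intro X
    set P := E * (Eᵀ * X) with hP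
    set R := X - P with hRdef
    have hRo : Eᵀ * R = 0 := by
      rw [hRdef, Matrix.mul_sub, hP, ← Matrix.mul_assoc, hortho, Matrix.one_mul, sub_self]
    have hAP : hatA * P = P := by
      ext i j
      have hcol : hatA.mulVec (fun k => P k j) = (fun k => P k j) := by
        rw [hEig1]
        have hrepr : (fun k => P k j)
            = ∑ m : Fin M, ((Eᵀ * X) m j) • (fun i => E i m) := by
          funext k
          rw [Finset.sum_apply]
          simp only [Pi.smul_apply, smul_eq_mul]
          rw [hP, Matrix.mul_apply]
          exact Finset.sum_congr rfl fun m _ => mul_comm _ _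
        rw [hrepr]
        exact Submodule.sum_mem _ fun m _ =>
          Submodule.smul_mem _ _ (Submodule.subset_span ⟨m, rfl⟩)
      calc (hatA * P) i j = hatA.mulVec (fun k => P k j) i := by
            simp [Matrix.mul_apply, Matrix.mulVec, dotProduct]
        _ = P i j := by rw [hcol]
    apply distTo_le_mul h0 hlam0
    intro Y hY
    obtain ⟨C2, rfl⟩ := hY
    have hXY : X - E * C2 = R + E * ((Eᵀ * X) - C2) := by
      rw [Matrix.mul_sub, hRdef, hP]; abel
    calc distTo S (hatA * X) ≤ frobNorm (hatA * X - P) := distTo_le _ (hmem _)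
      _ = frobNorm (hatA * R) := by rw [hRdef, Matrix.mul_sub, hAP]
      _ ≤ lam * frobNorm R := hspecM R hRo
      _ ≤ lam * frobNorm (X - E * C2) := by
          apply mul_le_mul_of_nonneg_left _ hlam0
          rw [hXY]; exact hpy R _ hRo
  -- relu maps the subspace into itself
  have hrelu_mem : ∀ Cm : Matrix (Fin M) (Fin C) ℝ,
      relu (E * Cm) = E * (Matrix.of fun m j => max (Cm m j) 0) := by
    intro Cm
    ext i j
    simp only [relu, Matrix.of_apply, Matrix.mul_apply]
    by_cases hex : ∃ m0, E i m0 ≠ 0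
    · obtain ⟨m0, hm0⟩ := hex
      have hz : ∀ m ∈ Finset.univ, m ≠ m0 → E i m * Cm m j = 0 := by
        intro m _ hm
        have : E i m = 0 := by
          by_contra hne
          exact hm (hdisj i m m0 hne hm0)
        rw [this, zero_mul]
      have hz' : ∀ m ∈ Finset.univ, m ≠ m0 → E i m * max (Cm m j) 0 = 0 := by
        intro m _ hm
        have : E i m = 0 := by
          by_contra hne
          exact hm (hdisj i m m0 hne hm0)
        rw [this, zero_mul]
      rw [Finset.sum_eq_single m0 hz (by simp), Finset.sum_eq_single m0 hz' (by simp)]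
      rw [mul_max_of_nonneg _ _ (hnonneg i m0), mul_zero]
    · push_neg at hex
      have : ∀ m, E i m = 0 := fun m => by
        by_contra hne; exact hne (hex m)
      simp [this]
  have stepRelu : ∀ X : Matrix (Fin N) (Fin C) ℝ,
      distTo S (relu X) ≤ distTo S X := by
    intro X
    have := distTo_le_mul h0 zero_le_one (X := X) (Z := relu X) ?_
    · simpa using this
    intro Y hY
    obtain ⟨Cm, rfl⟩ := hY
    rw [one_mul]
    have hmem' : relu (E * Cm) ∈ S := by rw [hrelu_mem]; exact hmem _
    refine le_trans (distTo_le _ hmem') (frob_mono fun i j => ?_)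
    simp only [Matrix.sub_apply, relu, Matrix.of_apply]
    exact abs_max_sub_max_le_abs _ _ _
  -- Step W : multiplication by W contracts by s
  have hfrobW : ∀ (l : ℕ) (Z : Matrix (Fin N) (Fin C) ℝ),
      frobNorm (Z * W l) ≤ s * frobNorm Z := by
    intro l Z
    rw [frobNorm, frobNorm]
    have hsum : ∑ i, ∑ j, ((Z * W l) i j) ^ 2 ≤ s ^ 2 * ∑ i, ∑ j, (Z i j) ^ 2 := by
      rw [Finset.mul_sum]
      refine Finset.sum_le_sum fun i _ => ?_
      have := hW l (fun k => Z i k)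
      simpa [Matrix.vecMul, dotProduct, Matrix.mul_apply] using this
    have h2 := Real.sqrt_le_sqrt hsum
    rwa [Real.sqrt_mul (by positivity), Real.sqrt_sq hs] at h2
  have stepW : ∀ (l : ℕ) (X : Matrix (Fin N) (Fin C) ℝ),
      distTo S (X * W l) ≤ s * distTo S X := by
    intro l X
    apply distTo_le_mul h0 hs
    intro Y hY
    obtain ⟨Cm, rfl⟩ := hY
    have hmem' : (E * Cm) * W l ∈ S := by rw [Matrix.mul_assoc]; exact hmem _
    calc distTo S (X * W l) ≤ frobNorm (X * W l - (E * Cm) * W l) := distTo_le _ hmem'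
      _ = frobNorm ((X - E * Cm) * W l) := by rw [Matrix.sub_mul]
      _ ≤ s * frobNorm (X - E * Cm) := hfrobW l _
  -- Step smul
  have stepSmul : ∀ X : Matrix (Fin N) (Fin C) ℝ,
      distTo S (α • X) ≤ α * distTo S X := by
    intro X
    apply distTo_le_mul h0 hα0
    intro Y hY
    obtain ⟨Cm, rfl⟩ := hY
    have hmem' : α • (E * Cm) ∈ S := ⟨α • Cm, by rw [Matrix.mul_smul]⟩
    calc distTo S (α • X) ≤ frobNorm (α • X - α • (E * Cm)) := distTo_le _ hmem'
      _ = frobNorm (α • (X - E * Cm)) := by rw [smul_sub]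
      _ = α * frobNorm (X - E * Cm) := by rw [frob_smul, abs_of_nonneg hα0]
  -- closure under addition
  have hadd : ∀ Y1 ∈ S, ∀ Y2 ∈ S, Y1 + Y2 ∈ S := by
    rintro Y1 ⟨C1, rfl⟩ Y2 ⟨C2, rfl⟩
    exact ⟨C1 + C2, by rw [Matrix.mul_add]⟩
  -- main contraction
  have main : ∀ l, distTo S (H (l + 1)) ≤ (s * lam + α) * distTo S (H l) := by
    intro l
    rw [hrec l, add_mul]
    refine le_trans (distTo_add_le h0 hadd _ _) (add_le_add ?_ (stepSmul _))
    calc distTo S (relu (hatA * H l * W l)) ≤ distTo S (hatA * H l * W l) := stepRelu _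
      _ ≤ s * distTo S (hatA * H l) := stepW l _
      _ ≤ s * (lam * distTo S (H l)) :=
          mul_le_mul_of_nonneg_left (stepA _) hs
      _ = s * lam * distTo S (H l) := (mul_assoc _ _ _).symm
  refine ⟨main, fun hlt => ?_⟩
  have hq0 : 0 ≤ s * lam + α := by positivity
  have hbound : ∀ l, distTo S (H l) ≤ (s * lam + α) ^ l * distTo S (H 0) := by
    intro l
    induction l with
    | zero => simp
    | succ n ih =>
      calc distTo S (H (n + 1)) ≤ (s * lam + α) * distTo S (H n) := main n
        _ ≤ (s * lam + α) * ((s * lam + α) ^ n * distTo S (H 0)) :=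
            mul_le_mul_of_nonneg_left ih hq0
        _ = (s * lam + α) ^ (n + 1) * distTo S (H 0) := by ring
  refine ⟨hbound, ?_⟩
  have htend := (tendsto_pow_atTop_nhds_zero_of_lt_one hq0 hlt).mul_const (distTo S (H 0))
  rw [zero_mul] at htend
  exact squeeze_zero (fun l => distTo_nonneg' h0 _) hbound htend
end
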